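/- arXiv:1705.10770 — 2 statements merged into one kernel-verified Lean document; each statement's English description precedes it below -/
import Mathlib

section
/- (Theorems 1 and 2: any set of variables selected by Forward-Backward Selection, or by Forward-Backward Selection with Early Dropping run to completion (FBED∞), is minimal.) Let (V_i)_{i ∈ ι} be a finite family of random variables on a standard Borel probability space and T a random variable. Let S₀ ⊆ ι satisfy the forward-phase termination condition: for every r ∈ ι \ S₀, T is conditionally independent of V_r given (V_j)_{j ∈ S₀}. Let S ⊆ S₀ be obtained from S₀ by a finite sequence of backward removals — each step removes one index s from the current set S_m such that T is conditionally independent of V_s given (V_j)_{j ∈ S_m \ {s}} — carried out until no index of the current set satisfies this condition. Then S is minimal with respect to T: (i) for every s ∈ S, T is NOT conditionally independent of V_s given (V_j)_{j ∈ S \ {s}}, and (ii) for every r ∈ ι \ S, T is conditionally independent of V_r given (V_j)_{j ∈ S}. -/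
open ProbabilityTheory MeasureTheory

/-- The σ-algebra generated jointly by the variables `V j`, `j ∈ B`. -/
def famAlg {Ω ι : Type*} (V : ι → Ω → ℝ) (B : Set ι) : MeasurableSpace Ω :=
  ⨆ j ∈ B, MeasurableSpace.comap (V j) inferInstance

theorem famAlg_le {Ω ι : Type*} {mΩ : MeasurableSpace Ω} {V : ι → Ω → ℝ}
    (hV : ∀ i, Measurable (V i)) (B : Set ι) : famAlg V B ≤ mΩ :=
  iSup₂_le fun j _ => (hV j).comap_le

/-- `T ⫫ V i | (V_j)_{j ∈ B}`: the σ-algebra generated by `T` is conditionally independent of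
the σ-algebra generated by `V i` given the σ-algebra generated jointly by `(V_j)_{j ∈ B}`. -/
def CondIndepVarFam {Ω ι : Type*} {mΩ : MeasurableSpace Ω} [StandardBorelSpace Ω]
    (μ : Measure Ω) [IsFiniteMeasure μ] (T : Ω → ℝ) (V : ι → Ω → ℝ)
    (hV : ∀ i, Measurable (V i)) (i : ι) (B : Set ι) : Prop :=
  CondIndep (famAlg V B) (MeasurableSpace.comap T inferInstance)
    (MeasurableSpace.comap (V i) inferInstance) (famAlg_le hV B) μ

/-- A set `S` of indices is minimal with respect to `T`: no selected variable can be removed,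
and no remaining variable can be added. -/
def MinimalVarSet {Ω ι : Type*} {mΩ : MeasurableSpace Ω} [StandardBorelSpace Ω]
    (μ : Measure Ω) [IsFiniteMeasure μ] (T : Ω → ℝ) (V : ι → Ω → ℝ)
    (hV : ∀ i, Measurable (V i)) (S : Set ι) : Prop :=
  (∀ s ∈ S, ¬ CondIndepVarFam μ T V hV s (S \ {s})) ∧
  (∀ r ∈ Set.univ \ S, CondIndepVarFam μ T V hV r S)

section Helpers
open MeasurableSpace

section PiSys
variable {Ω : Type*}

lemma gen_pi (m₁ m₂ : MeasurableSpace Ω) :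
    IsPiSystem (Set.image2 (· ∩ ·) {s | MeasurableSet[m₁] s} {s | MeasurableSet[m₂] s}) := by
  rintro _ ⟨a, ha, b, hb, rfl⟩ _ ⟨c, hc, d, hd, rfl⟩ -
  exact ⟨a ∩ c, ha.inter hc, b ∩ d, hb.inter hd, by rw [Set.inter_inter_inter_comm]⟩

lemma gen_sup (m₁ m₂ : MeasurableSpace Ω) :
    generateFrom (Set.image2 (· ∩ ·) {s | MeasurableSet[m₁] s} {s | MeasurableSet[m₂] s})
      = m₁ ⊔ m₂ := by
  apply le_antisymm
  · refine generateFrom_le ?_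
    rintro _ ⟨a, ha, b, hb, rfl⟩
    exact MeasurableSet.inter (le_sup_left (b := m₂) a ha) (le_sup_right (a := m₁) b hb)
  · refine sup_le ?_ ?_
    · intro s hs
      exact measurableSet_generateFrom ⟨s, hs, Set.univ, MeasurableSet.univ, by simp⟩
    · intro s hs
      exact measurableSet_generateFrom ⟨Set.univ, MeasurableSet.univ, s, hs, by simp⟩
end PiSys

section Main
variable {Ω : Type*} {m' m₁ m₂ : MeasurableSpace Ω} {mΩ : MeasurableSpace Ω}
  [StandardBorelSpace Ω] {μ : Measure Ω} [IsFiniteMeasure μ]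

lemma condexp_indicator_bound (hm' : m' ≤ mΩ) {t : Set Ω} (ht : MeasurableSet t) :
    ∀ᵐ x ∂μ, ‖(μ[t.indicator (fun _ => (1:ℝ)) | m']) x‖ ≤ 1 := by
  have h0 : 0 ≤ᵐ[μ] μ[t.indicator (fun _ => (1:ℝ)) | m'] :=
    condExp_nonneg (by filter_upwards with x; by_cases hx : x ∈ t <;>
      simp [Set.indicator_apply, hx])
  have h1 : μ[t.indicator (fun _ => (1:ℝ)) | m'] ≤ᵐ[μ] μ[(fun _ => (1:ℝ)) | m'] :=
    condExp_mono ((integrable_const (1:ℝ)).indicator ht) (integrable_const 1)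
      (by filter_upwards with x; by_cases hx : x ∈ t <;> simp [Set.indicator_apply, hx])
  have hc : μ[(fun _ => (1:ℝ)) | m'] = fun _ => (1:ℝ) := condExp_const hm' 1
  filter_upwards [h0, h1] with x hx0 hx1
  have h0' : (0:ℝ) ≤ (μ[t.indicator (fun _ => (1:ℝ)) | m']) x := hx0
  have h1' : (μ[t.indicator (fun _ => (1:ℝ)) | m']) x ≤ 1 := by rw [hc] at hx1; exact hx1
  rw [Real.norm_eq_abs, abs_le]
  exact ⟨by linarith, h1'⟩

/-- Forward direction: conditional independence implies collapse of the conditional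
expectation of indicators of `m₁`-sets. -/
lemma condIndep_collapse [StandardBorelSpace Ω] (hm' : m' ≤ mΩ) (hm₁ : m₁ ≤ mΩ) (hm₂ : m₂ ≤ mΩ)
    (h : CondIndep m' m₁ m₂ hm' μ) {t : Set Ω} (ht : MeasurableSet[m₁] t) :
    μ[t.indicator (fun _ => (1:ℝ)) | m' ⊔ m₂] =ᵐ[μ] μ[t.indicator (fun _ => (1:ℝ)) | m'] := by
  have hsup : m' ⊔ m₂ ≤ mΩ := sup_le hm' hm₂
  set f : Ω → ℝ := t.indicator (fun _ => (1:ℝ)) with hf_def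
  have htp : MeasurableSet[mΩ] t := hm₁ t ht
  have hf_int : Integrable f μ := (integrable_const (1:ℝ)).indicator htp
  set g : Ω → ℝ := μ[f | m'] with hg_def
  have hprod := (condIndep_iff m' m₁ m₂ hm' hm₁ hm₂ μ).mp h
  have key : ∀ s, MeasurableSet[m' ⊔ m₂] s → ∫ x in s, g x ∂μ = ∫ x in s, f x ∂μ := by
    intro s hs
    refine MeasurableSpace.induction_on_inter (m := m' ⊔ m₂)
      (C := fun s _ => ∫ x in s, g x ∂μ = ∫ x in s, f x ∂μ)
      (gen_sup m' m₂).symm (gen_pi m' m₂) (by simp) ?_ ?_ ?_ s hs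
    · rintro _ ⟨a, ha, b, hb, rfl⟩
      have hap : MeasurableSet[mΩ] a := hm' a ha
      have hbp : MeasurableSet[mΩ] b := hm₂ b hb
      set e : Ω → ℝ := b.indicator (fun _ => (1:ℝ)) with he_def
      have he_int : Integrable e μ := (integrable_const (1:ℝ)).indicator hbp
      have hge : ∀ (h : Ω → ℝ), b.indicator h = fun x => e x * h x := by
        intro h; funext x; by_cases hx : x ∈ b <;> simp [he_def, Set.indicator_apply, hx]
      have hfe_int : Integrable (fun x => e x * f x) μ := by
        rw [← hge]; exact hf_int.indicator hbp
      have hge_int : Integrable (fun x => e x * g x) μ := by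
        rw [← hge]; exact integrable_condExp.indicator hbp
      have hL : ∫ x in a ∩ b, g x ∂μ = ∫ x in a, b.indicator g x ∂μ :=
        (setIntegral_indicator hbp).symm
      have hR : ∫ x in a ∩ b, f x ∂μ = ∫ x in a, b.indicator f x ∂μ :=
        (setIntegral_indicator hbp).symm
      rw [hL, hR, hge g, hge f]
      have hpull : μ[(fun x => g x * e x) | m'] =ᵐ[μ] fun x => g x * (μ[e|m']) x :=
        condExp_stronglyMeasurable_mul_of_bound hm' stronglyMeasurable_condExp
          he_int 1 (condexp_indicator_bound hm' htp)
      have hfe : (fun x => e x * f x) = (t ∩ b).indicator (fun _ => (1:ℝ)) := by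
        funext x
        by_cases hx : x ∈ b <;> by_cases hx' : x ∈ t <;>
          simp [he_def, hf_def, Set.indicator_apply, hx, hx', Set.mem_inter_iff]
      have hprod' : μ[(fun x => e x * f x)|m'] =ᵐ[μ] fun x => g x * (μ[e|m']) x := by
        rw [hfe]
        exact (hprod t b ht hb).trans (by rfl)
      calc ∫ x in a, e x * g x ∂μ = ∫ x in a, (μ[(fun x => e x * g x)|m']) x ∂μ :=
              (setIntegral_condExp hm' hge_int ha).symm
        _ = ∫ x in a, (g x * (μ[e|m']) x) ∂μ := by
              refine setIntegral_congr_ae hap ?_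
              have h2 : μ[(fun x => e x * g x)|m'] =ᵐ[μ] fun x => g x * (μ[e|m']) x := by
                simpa [mul_comm] using hpull
              filter_upwards [h2] with x hx _ using hx
        _ = ∫ x in a, (μ[(fun x => e x * f x)|m']) x ∂μ := by
              refine (setIntegral_congr_ae hap ?_).symm
              filter_upwards [hprod'] with x hx _ using hx
        _ = ∫ x in a, e x * f x ∂μ := setIntegral_condExp hm' hfe_int ha
    · intro u hu hCu
      have hup : MeasurableSet[mΩ] u := hsup u hu
      have h1 := integral_add_compl (μ := μ) hup (integrable_condExp (f := f) (m := m'))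
      have h2 := integral_add_compl (μ := μ) hup hf_int
      have h3 : ∫ x, g x ∂μ = ∫ x, f x ∂μ := integral_condExp hm'
      linarith
    · intro F hdisj hFm hC
      have hFp : ∀ i, MeasurableSet[mΩ] (F i) := fun i => hsup _ (hFm i)
      have hg1 := hasSum_integral_iUnion (μ := μ) (f := g) hFp hdisj
        integrable_condExp.integrableOn
      have hf1 := hasSum_integral_iUnion (μ := μ) (f := f) hFp hdisj
        hf_int.integrableOn
      have heq : (fun i => ∫ x in F i, g x ∂μ) = fun i => ∫ x in F i, f x ∂μ := funext hC
      rw [heq] at hg1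
      exact hg1.unique hf1
  exact (ae_eq_condExp_of_forall_setIntegral_eq hsup hf_int
    (fun s _ _ => integrable_condExp.integrableOn)
    (fun s hs _ => key s hs)
    ((stronglyMeasurable_condExp.mono (le_sup_left : m' ≤ m' ⊔ m₂)).aestronglyMeasurable)).symm

end Main

section Main2
variable {Ω : Type*} {m' m₁ m₂ : MeasurableSpace Ω} {mΩ : MeasurableSpace Ω}
  [StandardBorelSpace Ω] {μ : Measure Ω} [IsFiniteMeasure μ]

/-- Backward direction: collapse of conditional expectations implies conditional
independence. -/
lemma condIndep_of_collapse (hm' : m' ≤ mΩ) (hm₁ : m₁ ≤ mΩ) (hm₂ : m₂ ≤ mΩ)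
    (h : ∀ t, MeasurableSet[m₁] t →
      μ[t.indicator (fun _ => (1:ℝ)) | m' ⊔ m₂] =ᵐ[μ] μ[t.indicator (fun _ => (1:ℝ)) | m']) :
    CondIndep m' m₁ m₂ hm' μ := by
  have hsup : m' ⊔ m₂ ≤ mΩ := sup_le hm' hm₂
  rw [condIndep_iff m' m₁ m₂ hm' hm₁ hm₂ μ]
  intro t1 t2 ht1 ht2
  have ht1p : MeasurableSet[mΩ] t1 := hm₁ t1 ht1
  have ht2p : MeasurableSet[mΩ] t2 := hm₂ t2 ht2
  set f : Ω → ℝ := t1.indicator (fun _ => (1:ℝ)) with hf_def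
  set e : Ω → ℝ := t2.indicator (fun _ => (1:ℝ)) with he_def
  have hf_int : Integrable f μ := (integrable_const (1:ℝ)).indicator ht1p
  have he_int : Integrable e μ := (integrable_const (1:ℝ)).indicator ht2p
  have hfe : (t1 ∩ t2).indicator (fun _ => (1:ℝ)) = fun x => e x * f x := by
    funext x
    by_cases hx : x ∈ t1 <;> by_cases hx' : x ∈ t2 <;>
      simp [he_def, hf_def, Set.indicator_apply, hx, hx', Set.mem_inter_iff]
  have he_sm : StronglyMeasurable[m' ⊔ m₂] e :=
    (stronglyMeasurable_const.indicator ht2).mono le_sup_right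
  have he_bd : ∀ᵐ x ∂μ, ‖e x‖ ≤ 1 := by
    filter_upwards with x; by_cases hx : x ∈ t2 <;> simp [he_def, Set.indicator_apply, hx]
  -- step 1: μ[e*f | m'⊔m₂] =ᵐ e * μ[f|m'⊔m₂] =ᵐ e * μ[f|m']
  have step1 : μ[(fun x => e x * f x) | m' ⊔ m₂] =ᵐ[μ] fun x => e x * (μ[f|m']) x := by
    refine (condExp_stronglyMeasurable_mul_of_bound hsup he_sm hf_int 1 he_bd).trans ?_
    filter_upwards [h t1 ht1] with x hx
    rw [Pi.mul_apply, hx]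
  -- step 2: tower
  have step2 : μ[(fun x => e x * f x) | m'] =ᵐ[μ]
      μ[(fun x => e x * (μ[f|m']) x) | m'] := by
    refine ((condExp_condExp_of_le le_sup_left hsup).symm.trans ?_)
    exact condExp_congr_ae step1
  -- step 3: pull out μ[f|m']
  have step3 : μ[(fun x => (μ[f|m']) x * e x) | m'] =ᵐ[μ]
      fun x => (μ[f|m']) x * (μ[e|m']) x :=
    condExp_stronglyMeasurable_mul_of_bound hm' stronglyMeasurable_condExp he_int 1
      (condexp_indicator_bound hm' ht1p)
  have : μ[(t1 ∩ t2).indicator (fun _ => (1:ℝ)) | m'] =ᵐ[μ]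
      fun x => (μ[f|m']) x * (μ[e|m']) x := by
    rw [hfe]
    refine step2.trans ?_
    have hcomm : (fun x => e x * (μ[f|m']) x) = fun x => (μ[f|m']) x * e x := by
      funext x; ring
    rw [hcomm]
    exact step3
  exact this.trans (by rfl)

/-- Contraction + decomposition: `T ⫫ Y | Z` and `T ⫫ X | Z ⊔ Y` imply `T ⫫ X | Z`. -/
lemma condIndep_contraction {mT mX mY mZ mW : MeasurableSpace Ω} {mΩ : MeasurableSpace Ω}
    [StandardBorelSpace Ω] {μ : Measure Ω} [IsFiniteMeasure μ]
    (hT : mT ≤ mΩ) (hX : mX ≤ mΩ) (hY : mY ≤ mΩ) {hZ : mZ ≤ mΩ} {hW : mW ≤ mΩ}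
    (hWeq : mW = mZ ⊔ mY)
    (h1 : CondIndep mZ mT mY hZ μ) (h2 : CondIndep mW mT mX hW μ) :
    CondIndep mZ mT mX hZ μ := by
  subst hWeq
  refine condIndep_of_collapse hZ hT hX ?_
  intro t ht
  have c1 : μ[t.indicator (fun _ => (1:ℝ)) | mZ ⊔ mY] =ᵐ[μ] μ[t.indicator (fun _ => (1:ℝ)) | mZ] :=
    condIndep_collapse hZ hT hY h1 ht
  have c2 : μ[t.indicator (fun _ => (1:ℝ)) | (mZ ⊔ mY) ⊔ mX] =ᵐ[μ]
      μ[t.indicator (fun _ => (1:ℝ)) | mZ ⊔ mY] :=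
    condIndep_collapse hW hT hX h2 ht
  have hle1 : mZ ⊔ mX ≤ (mZ ⊔ mY) ⊔ mX := sup_le_sup_right le_sup_left _
  have hle2 : (mZ ⊔ mY) ⊔ mX ≤ mΩ := sup_le (sup_le hZ hY) hX
  calc μ[t.indicator (fun _ => (1:ℝ)) | mZ ⊔ mX]
      =ᵐ[μ] μ[μ[t.indicator (fun _ => (1:ℝ)) | (mZ ⊔ mY) ⊔ mX] | mZ ⊔ mX] :=
        (condExp_condExp_of_le hle1 hle2).symm
    _ =ᵐ[μ] μ[μ[t.indicator (fun _ => (1:ℝ)) | mZ] | mZ ⊔ mX] :=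
        condExp_congr_ae (c2.trans c1)
    _ =ᵐ[μ] μ[t.indicator (fun _ => (1:ℝ)) | mZ] := by
        rw [condExp_of_stronglyMeasurable (sup_le hZ hX)
          (stronglyMeasurable_condExp.mono le_sup_left) integrable_condExp]

end Main2

lemma famAlg_diff_sup {Ω ι : Type*} (V : ι → Ω → ℝ) {B : Set ι} {s : ι} (h : s ∈ B) :
    famAlg V B = famAlg V (B \ {s}) ⊔ MeasurableSpace.comap (V s) inferInstance := by
  have hB : B = insert s (B \ {s}) := by
    rw [Set.insert_diff_singleton, Set.insert_eq_self.mpr h]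
  calc famAlg V B = famAlg V (insert s (B \ {s})) := by rw [← hB]
    _ = MeasurableSpace.comap (V s) inferInstance ⊔ famAlg V (B \ {s}) := by
        rw [famAlg, iSup_insert]; rfl
    _ = famAlg V (B \ {s}) ⊔ MeasurableSpace.comap (V s) inferInstance := sup_comm _ _


end Helpers

/-- Theorems 1 and 2: any set of variables selected by Forward-Backward Selection (or FBED∞),
i.e. obtained from a forward-phase-terminal set `S 0` by backward removals carried out until no
further removal is possible, is minimal with respect to `T`. -/
theorem fbs_selected_set_minimal {Ω ι : Type*} {mΩ : MeasurableSpace Ω}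
    [StandardBorelSpace Ω] [Fintype ι] (μ : Measure Ω) [IsProbabilityMeasure μ]
    (T : Ω → ℝ) (V : ι → Ω → ℝ) (hT : Measurable T) (hV : ∀ i, Measurable (V i))
    (k : ℕ) (S : ℕ → Set ι) (s : ℕ → ι)
    (h0 : ∀ r ∈ Set.univ \ S 0, CondIndepVarFam μ T V hV r (S 0))
    (hmem : ∀ m < k, s m ∈ S m)
    (hstep : ∀ m < k, S (m + 1) = S m \ {s m})
    (hind : ∀ m < k, CondIndepVarFam μ T V hV (s m) (S m \ {s m}))
    (hstop : ∀ t ∈ S k, ¬ CondIndepVarFam μ T V hV t (S k \ {t})) :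
    MinimalVarSet μ T V hV (S k) := by
  have claim : ∀ m, m ≤ k → ∀ r ∈ Set.univ \ S m, CondIndepVarFam μ T V hV r (S m) := by
    intro m
    induction m with
    | zero => exact fun _ => h0
    | succ n ih =>
      intro hle r hr
      have hn : n < k := lt_of_lt_of_le (Nat.lt_succ_self n) hle
      have hS : S (n + 1) = S n \ {s n} := hstep n hn
      rw [hS] at hr ⊢
      by_cases hrs : r = s n
      · subst hrs
        exact hind n hn
      · have hrn : r ∉ S n := fun hmem' => hr.2 ⟨hmem', hrs⟩
        have hQ : CondIndepVarFam μ T V hV r (S n) :=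
          ih (le_of_lt hn) r ⟨Set.mem_univ r, hrn⟩
        exact condIndep_contraction hT.comap_le (hV r).comap_le (hV (s n)).comap_le
          (famAlg_diff_sup V (hmem n hn)) (hind n hn) hQ
  exact ⟨hstop, claim k le_rfl⟩
end

section
/- (Removability of all non-Markov-blanket variables during the backward phase; claim in the proofs of Theorems 3 and 4.) Let (V_i)_{i ∈ ι} be a finite family of random variables on a standard Borel probability space and T a random variable. Let M ⊆ S ⊆ ι be such that T is conditionally independent of the family (V_i)_{i ∈ S \ M} given (V_j)_{j ∈ M}. Then for every set W with M ⊆ W ⊆ S and every x ∈ W \ M, T is conditionally independent of V_x given (V_j)_{j ∈ W \ {x}}. In particular, backward elimination started from S can successively remove every index of S \ M: for any enumeration x_1, …, x_k of S \ M, writing S_m = S \ {x_1, …, x_{m-1}}, each removal satisfies the backward criterion that T is conditionally independent of V_{x_m} given (V_j)_{j ∈ S_m \ {x_m}}. -/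
open ProbabilityTheory MeasureTheory

/-- `T ⫫ (V_i)_{i ∈ A} | (V_j)_{j ∈ B}`. -/
def CondIndepSetFam {Ω ι : Type*} {mΩ : MeasurableSpace Ω} [StandardBorelSpace Ω]
    (μ : Measure Ω) [IsFiniteMeasure μ] (T : Ω → ℝ) (V : ι → Ω → ℝ)
    (hV : ∀ i, Measurable (V i)) (A B : Set ι) : Prop :=
  CondIndep (famAlg V B) (MeasurableSpace.comap T inferInstance)
    (famAlg V A) (famAlg_le hV B) μ

lemma famAlg_union {Ω ι : Type*} (V : ι → Ω → ℝ) (A B : Set ι) :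
    famAlg V (A ∪ B) = famAlg V A ⊔ famAlg V B :=
  iSup_union

lemma famAlg_mono {Ω ι : Type*} (V : ι → Ω → ℝ) {A B : Set ι} (hAB : A ⊆ B) :
    famAlg V A ≤ famAlg V B :=
  biSup_mono hAB

lemma comap_le_famAlg {Ω ι : Type*} (V : ι → Ω → ℝ) {B : Set ι} {x : ι} (hx : x ∈ B) :
    MeasurableSpace.comap (V x) inferInstance ≤ famAlg V B :=
by
  unfold famAlg
  exact le_biSup (fun j => MeasurableSpace.comap (V j) inferInstance) hx


lemma sup_eq_generateFrom_inter {Ω : Type*} (m' m₂ : MeasurableSpace Ω) :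
    m' ⊔ m₂ = MeasurableSpace.generateFrom
      {A | ∃ u t, MeasurableSet[m'] u ∧ MeasurableSet[m₂] t ∧ A = u ∩ t} := by
  apply le_antisymm
  · refine sup_le ?_ ?_
    · intro u hu
      exact MeasurableSpace.measurableSet_generateFrom ⟨u, Set.univ, hu, MeasurableSet.univ,
        (Set.inter_univ u).symm⟩
    · intro t ht
      exact MeasurableSpace.measurableSet_generateFrom ⟨Set.univ, t, MeasurableSet.univ, ht,
        (Set.univ_inter t).symm⟩
  · refine MeasurableSpace.generateFrom_le ?_
    rintro A ⟨u, t, hu, ht, rfl⟩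
    exact MeasurableSet.inter (le_sup_left (a := m') (b := m₂) _ hu)
      (le_sup_right (a := m') (b := m₂) _ ht)

lemma isPiSystem_inter_sets {Ω : Type*} (m' m₂ : MeasurableSpace Ω) :
    IsPiSystem {A | ∃ u t, MeasurableSet[m'] u ∧ MeasurableSet[m₂] t ∧ A = u ∩ t} := by
  rintro A ⟨u₁, t₁, hu₁, ht₁, rfl⟩ B ⟨u₂, t₂, hu₂, ht₂, rfl⟩ -
  exact ⟨u₁ ∩ u₂, t₁ ∩ t₂, hu₁.inter hu₂, ht₁.inter ht₂, by ext x; simp; tauto⟩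


lemma condexp_indicator_sup_of_condIndep {Ω : Type*} (m' m₁ m₂ : MeasurableSpace Ω)
    {mΩ : MeasurableSpace Ω} [StandardBorelSpace Ω] {μ : Measure Ω} [IsFiniteMeasure μ]
    (hm' : m' ≤ mΩ) (hm₁ : m₁ ≤ mΩ) (hm₂ : m₂ ≤ mΩ)
    (h : CondIndep m' m₁ m₂ hm' μ) {t1 : Set Ω} (h1 : MeasurableSet[m₁] t1) :
    (μ⟦t1 | m' ⊔ m₂⟧) =ᵐ[μ] (μ⟦t1 | m'⟧) := by
  have hm : m' ⊔ m₂ ≤ mΩ := sup_le hm' hm₂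
  have ht1 : MeasurableSet[mΩ] t1 := hm₁ _ h1
  have hf : Integrable (t1.indicator fun _ => (1:ℝ)) μ :=
    (integrable_const (1:ℝ)).indicator ht1
  refine (ae_eq_condExp_of_forall_setIntegral_eq hm hf
    (fun s _ _ => integrable_condExp.integrableOn) ?_
    ((stronglyMeasurable_condExp.mono (le_sup_left (a := m') (b := m₂))).aestronglyMeasurable)).symm
  intro s hs _
  refine @MeasurableSpace.induction_on_inter Ω (m' ⊔ m₂)
    (fun A _ => ∫ x in A, (μ⟦t1 | m'⟧) x ∂μ = ∫ x in A, t1.indicator (fun _ => (1:ℝ)) x ∂μ)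
    _ (sup_eq_generateFrom_inter m' m₂) (isPiSystem_inter_sets m' m₂)
    (by simp) ?_ ?_ ?_ s hs
  · -- base case
    rintro A ⟨u, t2, hu, ht2, rfl⟩
    have hu' : MeasurableSet[mΩ] u := hm' _ hu
    have ht2' : MeasurableSet[mΩ] t2 := hm₂ _ ht2
    have hind : t2.indicator (μ⟦t1 | m'⟧) =
        (μ⟦t1 | m'⟧) * t2.indicator (fun _ => (1:ℝ)) := by
      funext x
      by_cases hx : x ∈ t2 <;> simp [Set.indicator_apply, hx]
    have hgind : Integrable ((μ⟦t1 | m'⟧) * t2.indicator fun _ => (1:ℝ)) μ := by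
      rw [← hind]; exact integrable_condExp.indicator ht2'
    have step1 : ∫ x in u ∩ t2, (μ⟦t1 | m'⟧) x ∂μ
        = ∫ x in u, ((μ⟦t1 | m'⟧) * t2.indicator fun _ => (1:ℝ)) x ∂μ := by
      rw [← hind, setIntegral_indicator ht2']
    have step2 : ∫ x in u, ((μ⟦t1 | m'⟧) * t2.indicator fun _ => (1:ℝ)) x ∂μ
        = ∫ x in u, (μ[(μ⟦t1 | m'⟧) * t2.indicator fun _ => (1:ℝ)|m']) x ∂μ :=
      (setIntegral_condExp hm' hgind hu).symm
    have hpull : (μ[(μ⟦t1 | m'⟧) * t2.indicator (fun _ => (1:ℝ))|m'])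
        =ᵐ[μ] (μ⟦t1 | m'⟧) * (μ⟦t2 | m'⟧) :=
      condExp_mul_of_stronglyMeasurable_left stronglyMeasurable_condExp hgind
        ((integrable_const (1:ℝ)).indicator ht2')
    have hci : (μ⟦t1 ∩ t2 | m'⟧) =ᵐ[μ] (μ⟦t1 | m'⟧) * (μ⟦t2 | m'⟧) :=
      (condIndep_iff m' m₁ m₂ hm' hm₁ hm₂ μ).mp h t1 t2 h1 ht2
    have step3 : ∫ x in u, (μ[(μ⟦t1 | m'⟧) * t2.indicator fun _ => (1:ℝ)|m']) x ∂μ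
        = ∫ x in u, (μ⟦t1 ∩ t2 | m'⟧) x ∂μ :=
      integral_congr_ae (ae_restrict_of_ae (hpull.trans hci.symm))
    have step4 : ∫ x in u, (μ⟦t1 ∩ t2 | m'⟧) x ∂μ
        = ∫ x in u, (t1 ∩ t2).indicator (fun _ => (1:ℝ)) x ∂μ :=
      setIntegral_condExp hm' ((integrable_const (1:ℝ)).indicator (ht1.inter ht2')) hu
    rw [step1, step2, step3, step4]
    rw [setIntegral_indicator (ht1.inter ht2'), setIntegral_indicator ht1]
    rw [show u ∩ (t1 ∩ t2) = u ∩ t2 ∩ t1 by ext x; simp; tauto]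
  · -- complement
    intro t htm hPt
    have ht : MeasurableSet[mΩ] t := hm _ htm
    have e1 : ∫ x in t, (μ⟦t1 | m'⟧) x ∂μ + ∫ x in tᶜ, (μ⟦t1 | m'⟧) x ∂μ
        = ∫ x, (μ⟦t1 | m'⟧) x ∂μ := integral_add_compl ht integrable_condExp
    have e2 : ∫ x in t, t1.indicator (fun _ => (1:ℝ)) x ∂μ
        + ∫ x in tᶜ, t1.indicator (fun _ => (1:ℝ)) x ∂μ
        = ∫ x, t1.indicator (fun _ => (1:ℝ)) x ∂μ := integral_add_compl ht hf
    have e3 : ∫ x, (μ⟦t1 | m'⟧) x ∂μ = ∫ x, t1.indicator (fun _ => (1:ℝ)) x ∂μ :=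
      integral_condExp hm'
    simp only at hPt
    linarith
  · -- disjoint union
    intro f hd hfm hPf
    have hfΩ : ∀ i, MeasurableSet[mΩ] (f i) := fun i => hm _ (hfm i)
    rw [integral_iUnion hfΩ hd integrable_condExp.integrableOn,
      integral_iUnion hfΩ hd hf.integrableOn]
    exact tsum_congr hPf

lemma condIndep_weak_union {Ω : Type*} (m' m₁ m₂ m₂a m₂b : MeasurableSpace Ω)
    {mΩ : MeasurableSpace Ω} [StandardBorelSpace Ω] {μ : Measure Ω} [IsFiniteMeasure μ]
    (hm' : m' ≤ mΩ) (hm₁ : m₁ ≤ mΩ) (hm₂ : m₂ ≤ mΩ)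
    (ha : m₂a ≤ m₂) (hb : m₂b ≤ m₂)
    (h : CondIndep m' m₁ m₂ hm' μ)
    (n : MeasurableSpace Ω) (hn : n = m' ⊔ m₂a) (hnΩ : n ≤ mΩ) :
    CondIndep n m₁ m₂b hnΩ μ := by
  subst hn
  have hnΩ' : m' ⊔ m₂a ≤ mΩ := hnΩ
  have hsup : m' ⊔ m₂ ≤ mΩ := sup_le hm' hm₂
  have hle : m' ⊔ m₂a ≤ m' ⊔ m₂ := sup_le le_sup_left (ha.trans le_sup_right)
  rw [condIndep_iff _ _ _ hnΩ hm₁ (hb.trans hm₂) μ]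
  intro t1 t2 h1 h2
  have ht1 : MeasurableSet[mΩ] t1 := hm₁ _ h1
  have ht2 : MeasurableSet[mΩ] t2 := hm₂ _ (hb _ h2)
  have hft1 : Integrable (t1.indicator fun _ => (1:ℝ)) μ := (integrable_const (1:ℝ)).indicator ht1
  have hft2 : Integrable (t2.indicator fun _ => (1:ℝ)) μ := (integrable_const (1:ℝ)).indicator ht2
  have key : (μ⟦t1 | m' ⊔ m₂⟧) =ᵐ[μ] (μ⟦t1 | m'⟧) :=
    condexp_indicator_sup_of_condIndep m' m₁ m₂ hm' hm₁ hm₂ h h1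
  set g := (μ⟦t1 | m'⟧) with hg
  have hgSM : StronglyMeasurable[m' ⊔ m₂a] g :=
    stronglyMeasurable_condExp.mono le_sup_left
  -- (1) μ⟦t1 | n⟧ = g
  have h1' : (μ⟦t1 | m' ⊔ m₂a⟧) =ᵐ[μ] g := by
    have tower : (μ[ (μ⟦t1 | m' ⊔ m₂⟧) | m' ⊔ m₂a]) =ᵐ[μ] (μ⟦t1 | m' ⊔ m₂a⟧) :=
      condExp_condExp_of_le hle hsup
    have step : (μ[ (μ⟦t1 | m' ⊔ m₂⟧) | m' ⊔ m₂a]) =ᵐ[μ] (μ[g | m' ⊔ m₂a]) :=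
      condExp_congr_ae key
    have last : (μ[g | m' ⊔ m₂a]) =ᵐ[μ] g :=
      Filter.EventuallyEq.of_eq (condExp_of_stronglyMeasurable hnΩ' hgSM integrable_condExp)
    exact (tower.symm.trans step).trans last
  -- (2) μ⟦t1 ∩ t2 | n⟧ = g * μ⟦t2 | n⟧
  have hindmul : (t1 ∩ t2).indicator (fun _ => (1:ℝ))
      = (t2.indicator fun _ => (1:ℝ)) * (t1.indicator fun _ => (1:ℝ)) := by
    funext x
    by_cases hx1 : x ∈ t1 <;> by_cases hx2 : x ∈ t2 <;>
      simp [Set.indicator_apply, hx1, hx2]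
  have hprod_int : Integrable ((t2.indicator fun _ => (1:ℝ))
      * (t1.indicator fun _ => (1:ℝ))) μ := by
    rw [← hindmul]; exact (integrable_const (1:ℝ)).indicator (ht1.inter ht2)
  have pull1 : (μ[ (t2.indicator fun _ => (1:ℝ)) * (t1.indicator fun _ => (1:ℝ)) | m' ⊔ m₂])
      =ᵐ[μ] (t2.indicator fun _ => (1:ℝ)) * (μ⟦t1 | m' ⊔ m₂⟧) :=
    condExp_mul_of_stronglyMeasurable_left
      ((stronglyMeasurable_const.indicator (le_sup_right (a := m') (b := m₂) _ (hb _ h2))))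
      hprod_int hft1
  have h2' : (μ⟦t1 ∩ t2 | m' ⊔ m₂a⟧) =ᵐ[μ] g * (μ⟦t2 | m' ⊔ m₂a⟧) := by
    have tower : (μ[ (μ[ (t1 ∩ t2).indicator (fun _ => (1:ℝ)) | m' ⊔ m₂]) | m' ⊔ m₂a])
        =ᵐ[μ] (μ⟦t1 ∩ t2 | m' ⊔ m₂a⟧) := condExp_condExp_of_le hle hsup
    have inner : (μ[ (t1 ∩ t2).indicator (fun _ => (1:ℝ)) | m' ⊔ m₂])
        =ᵐ[μ] (t2.indicator fun _ => (1:ℝ)) * g := by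
      rw [hindmul]
      exact pull1.trans (Filter.EventuallyEq.mul Filter.EventuallyEq.rfl key)
    have step : (μ[ (μ[ (t1 ∩ t2).indicator (fun _ => (1:ℝ)) | m' ⊔ m₂]) | m' ⊔ m₂a])
        =ᵐ[μ] (μ[ (t2.indicator fun _ => (1:ℝ)) * g | m' ⊔ m₂a]) := condExp_congr_ae inner
    have hgt2comm : (t2.indicator fun _ => (1:ℝ)) * g = g * (t2.indicator fun _ => (1:ℝ)) :=
      mul_comm _ _
    have hgt2int : Integrable (g * (t2.indicator fun _ => (1:ℝ))) μ := by
      have : g * (t2.indicator fun _ => (1:ℝ)) = t2.indicator g := by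
        funext x
        by_cases hx : x ∈ t2 <;> simp [Set.indicator_apply, hx]
      rw [this]; exact integrable_condExp.indicator ht2
    have pull2 : (μ[ g * (t2.indicator fun _ => (1:ℝ)) | m' ⊔ m₂a])
        =ᵐ[μ] g * (μ⟦t2 | m' ⊔ m₂a⟧) :=
      condExp_mul_of_stronglyMeasurable_left hgSM hgt2int hft2
    calc (μ⟦t1 ∩ t2 | m' ⊔ m₂a⟧)
        =ᵐ[μ] (μ[ (t2.indicator fun _ => (1:ℝ)) * g | m' ⊔ m₂a]) := tower.symm.trans step
      _ =ᵐ[μ] g * (μ⟦t2 | m' ⊔ m₂a⟧) := by rw [hgt2comm]; exact pull2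
  refine h2'.trans ?_
  exact (Filter.EventuallyEq.mul h1'.symm Filter.EventuallyEq.rfl)
/-- Removability of all non-Markov-blanket variables during the backward phase (claim in the
proofs of Theorems 3 and 4): if `M ⊆ S` and `T ⫫ (S \ M) | M`, then for every `W` with
`M ⊆ W ⊆ S` and every `x ∈ W \ M`, `T ⫫ V x | W \ {x}`; in particular, backward elimination
started from `S` can successively remove all indices of `S \ M` in any order. -/
theorem backward_removes_nonMB {Ω ι : Type*} {mΩ : MeasurableSpace Ω}
    [StandardBorelSpace Ω] [Fintype ι] (μ : Measure Ω) [IsProbabilityMeasure μ]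
    (T : Ω → ℝ) (V : ι → Ω → ℝ) (hT : Measurable T) (hV : ∀ i, Measurable (V i))
    (M S : Set ι) (hMS : M ⊆ S)
    (h : CondIndepSetFam μ T V hV (S \ M) M) :
    (∀ W, M ⊆ W → W ⊆ S → ∀ x ∈ W \ M, CondIndepVarFam μ T V hV x (W \ {x})) ∧
    (∀ (k : ℕ) (x : Fin k → ι), Function.Injective x → Set.range x = S \ M →
      ∀ m : Fin k,
        CondIndepVarFam μ T V hV (x m) ((S \ (x '' {j | j < m})) \ {x m})) := by
  have part1 : ∀ W, M ⊆ W → W ⊆ S → ∀ x ∈ W \ M,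
      CondIndepVarFam μ T V hV x (W \ {x}) := by
    intro W hMW hWS x hx
    obtain ⟨hxW, hxM⟩ := hx
    have hMW' : M ⊆ W \ {x} := fun y hy =>
      ⟨hMW hy, fun he => hxM (Set.mem_singleton_iff.mp he ▸ hy)⟩
    have hdecomp : famAlg V (W \ {x}) = famAlg V M ⊔ famAlg V ((W \ {x}) \ M) := by
      rw [← famAlg_union, Set.union_diff_cancel hMW']
    have hsub : (W \ {x}) \ M ⊆ S \ M := fun y hy => ⟨hWS hy.1.1, hy.2⟩
    exact condIndep_weak_union (famAlg V M) (MeasurableSpace.comap T inferInstance)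
      (famAlg V (S \ M)) (famAlg V ((W \ {x}) \ M))
      (MeasurableSpace.comap (V x) inferInstance)
      (famAlg_le hV M) hT.comap_le (famAlg_le hV (S \ M))
      (famAlg_mono V hsub) (comap_le_famAlg V ⟨hWS hxW, hxM⟩) h
      (famAlg V (W \ {x})) hdecomp (famAlg_le hV (W \ {x}))
  refine ⟨part1, ?_⟩
  intro k x hinj hrange m
  have him : x '' {j | j < m} ⊆ S \ M := by
    rw [← hrange]; exact Set.image_subset_range x _
  have hMW : M ⊆ S \ (x '' {j | j < m}) := fun y hy =>
    ⟨hMS hy, fun hc => (him hc).2 hy⟩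
  have hxm : x m ∈ S \ M := by rw [← hrange]; exact Set.mem_range_self m
  have hxmW : x m ∈ (S \ (x '' {j | j < m})) \ M := by
    refine ⟨⟨hxm.1, ?_⟩, hxm.2⟩
    rintro ⟨j, hj, hje⟩
    exact absurd (hinj hje) (ne_of_lt hj)
  exact part1 _ hMW Set.diff_subset _ hxmW
end
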